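/- Let ψ, Ψ : ℝ → ℝ be C², let λ ≠ 0, μ ∈ ℝ, t ∈ ℝ, and let ξ, ξ₁ ∈ ℝ³ be orthonormal (unit vectors with ξ·ξ₁ = 0). Define u : ℝ³ → ℝ³ by u(x) = λ⁻² ψ(λ(ξ₁·x + μt)) Ψ(λ(ξ·x)) ξ₁. Then for every x ∈ ℝ³, curl(curl u)(x) = ψ(λ(ξ₁·x + μt)) · (−Ψ″(λ(ξ·x))) · ξ₁ + ψ′(λ(ξ₁·x + μt)) · Ψ′(λ(ξ·x)) · ξ. In particular, with φ := −Ψ″, the intermittent building block ψφξ₁ plus an explicit corrector is a double curl, hence divergence-free. -/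

import Mathlib

/-- Partial derivative in the `i`-th coordinate direction of a scalar field on `ℝ³`. -/
noncomputable def pderiv3 (i : Fin 3) (f : (Fin 3 → ℝ) → ℝ) (x : Fin 3 → ℝ) : ℝ :=
  fderiv ℝ f x (Pi.single i 1)

/-- Curl of a vector field on `ℝ³`. -/
noncomputable def vcurl (F : (Fin 3 → ℝ) → Fin 3 → ℝ) (x : Fin 3 → ℝ) : Fin 3 → ℝ :=
  ![pderiv3 1 (fun y => F y 2) x - pderiv3 2 (fun y => F y 1) x,
    pderiv3 2 (fun y => F y 0) x - pderiv3 0 (fun y => F y 2) x,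
    pderiv3 0 (fun y => F y 1) x - pderiv3 1 (fun y => F y 0) x]

/-- Euclidean inner product on `ℝ³` (as `Fin 3 → ℝ`). -/
def dot3 (a b : Fin 3 → ℝ) : ℝ := ∑ i, a i * b i


lemma fin3_mk2 (h : 2 < 3) : (⟨2, h⟩ : Fin 3) = 2 := rfl
lemma fin3_mk1 (h : 1 < 3) : (⟨1, h⟩ : Fin 3) = 1 := rfl
lemma fin3_mk0 (h : 0 < 3) : (⟨0, h⟩ : Fin 3) = 0 := rfl

noncomputable def Ldot (a : Fin 3 → ℝ) : (Fin 3 → ℝ) →L[ℝ] ℝ :=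
  ∑ i, a i • (ContinuousLinearMap.proj i : (Fin 3 → ℝ) →L[ℝ] ℝ)

lemma Ldot_apply (a x : Fin 3 → ℝ) : Ldot a x = dot3 a x := by
  simp [Ldot, dot3, ContinuousLinearMap.sum_apply]

lemma Ldot_single (a : Fin 3 → ℝ) (j : Fin 3) : Ldot a (Pi.single j 1) = a j := by
  simp [Ldot_apply, dot3, Pi.single_apply, mul_ite]

lemma hasFDeriv_block (f g : ℝ → ℝ) (hf : ContDiff ℝ 1 f) (hg : ContDiff ℝ 1 g)
    (lam μ t k m : ℝ) (ξ ξ₁ : Fin 3 → ℝ) (x : Fin 3 → ℝ) :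
    HasFDerivAt (fun y => k * (f (lam * (dot3 ξ₁ y + μ * t)) * g (lam * dot3 ξ y)) * m)
      ((k * m * (lam * deriv f (lam * (dot3 ξ₁ x + μ * t)) * g (lam * dot3 ξ x))) • Ldot ξ₁
       + (k * m * (lam * f (lam * (dot3 ξ₁ x + μ * t)) * deriv g (lam * dot3 ξ x))) • Ldot ξ) x := by
  have hA : HasFDerivAt (fun y : Fin 3 → ℝ => lam * (dot3 ξ₁ y + μ * t)) (lam • Ldot ξ₁) x := by
    have h1 : HasFDerivAt (fun y : Fin 3 → ℝ => (Ldot ξ₁) y + μ * t) (Ldot ξ₁) x :=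
      (Ldot ξ₁).hasFDerivAt.add_const _
    have h2 := h1.const_mul lam
    simpa [Ldot_apply, mul_comm] using h2
  have hB : HasFDerivAt (fun y : Fin 3 → ℝ => lam * dot3 ξ y) (lam • Ldot ξ) x := by
    have h2 := ((Ldot ξ).hasFDerivAt (x := x)).const_mul lam
    simpa [Ldot_apply] using h2
  have hfA : HasFDerivAt (fun y : Fin 3 → ℝ => f (lam * (dot3 ξ₁ y + μ * t)))
      (deriv f (lam * (dot3 ξ₁ x + μ * t)) • (lam • Ldot ξ₁)) x :=
    (hf.differentiable one_ne_zero _).hasDerivAt.comp_hasFDerivAt x hA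
  have hgB : HasFDerivAt (fun y : Fin 3 → ℝ => g (lam * dot3 ξ y))
      (deriv g (lam * dot3 ξ x) • (lam • Ldot ξ)) x :=
    (hg.differentiable one_ne_zero _).hasDerivAt.comp_hasFDerivAt x hB
  have h := ((hfA.mul hgB).const_mul k).mul_const m
  refine h.congr_fderiv ?_
  module

lemma pderiv3_block (f g : ℝ → ℝ) (hf : ContDiff ℝ 1 f) (hg : ContDiff ℝ 1 g)
    (lam μ t k m : ℝ) (ξ ξ₁ : Fin 3 → ℝ) (i : Fin 3) (x : Fin 3 → ℝ) :
    pderiv3 i (fun y => k * (f (lam * (dot3 ξ₁ y + μ * t)) * g (lam * dot3 ξ y)) * m) x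
      = k * m * (lam * deriv f (lam * (dot3 ξ₁ x + μ * t)) * g (lam * dot3 ξ x)) * ξ₁ i
        + k * m * (lam * f (lam * (dot3 ξ₁ x + μ * t)) * deriv g (lam * dot3 ξ x)) * ξ i := by
  rw [pderiv3, (hasFDeriv_block f g hf hg lam μ t k m ξ ξ₁ x).fderiv]
  simp [Ldot_single]

lemma pderiv3_blockA (f g : ℝ → ℝ) (hf : ContDiff ℝ 1 f) (hg : ContDiff ℝ 1 g)
    (lam μ t : ℝ) (hlam : lam ≠ 0) (ξ ξ₁ : Fin 3 → ℝ) (m : ℝ) (i : Fin 3) (x : Fin 3 → ℝ) :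
    pderiv3 i (fun y => lam⁻¹ * lam⁻¹ * (f (lam * (dot3 ξ₁ y + μ * t)) * g (lam * dot3 ξ y)) * m) x
      = lam⁻¹ * m * (deriv f (lam * (dot3 ξ₁ x + μ * t)) * g (lam * dot3 ξ x) * ξ₁ i
          + f (lam * (dot3 ξ₁ x + μ * t)) * deriv g (lam * dot3 ξ x) * ξ i) := by
  rw [pderiv3_block f g hf hg lam μ t (lam⁻¹ * lam⁻¹) m ξ ξ₁ i x]
  field_simp

lemma pderiv3_blockB (f g : ℝ → ℝ) (hf : ContDiff ℝ 1 f) (hg : ContDiff ℝ 1 g)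
    (lam μ t : ℝ) (hlam : lam ≠ 0) (ξ ξ₁ : Fin 3 → ℝ) (m : ℝ) (i : Fin 3) (x : Fin 3 → ℝ) :
    pderiv3 i (fun y => lam⁻¹ * (f (lam * (dot3 ξ₁ y + μ * t)) * g (lam * dot3 ξ y)) * m) x
      = m * (deriv f (lam * (dot3 ξ₁ x + μ * t)) * g (lam * dot3 ξ x) * ξ₁ i
          + f (lam * (dot3 ξ₁ x + μ * t)) * deriv g (lam * dot3 ξ x) * ξ i) := by
  rw [pderiv3_block f g hf hg lam μ t lam⁻¹ m ξ ξ₁ i x]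
  field_simp

/-- For `u(x) = λ⁻² ψ(λ(ξ₁·x + μt)) Ψ(λ(ξ·x)) ξ₁` with `(ξ, ξ₁)` orthonormal,
`curl(curl u)(x) = ψ(λ(ξ₁·x+μt))·(−Ψ″(λ(ξ·x)))·ξ₁ + ψ′(λ(ξ₁·x+μt))·Ψ′(λ(ξ·x))·ξ`. -/
theorem double_curl_of_intermittent_block
    (ψ Ψ : ℝ → ℝ) (hψ : ContDiff ℝ 2 ψ) (hΨ : ContDiff ℝ 2 Ψ)
    (lam μ t : ℝ) (hlam : lam ≠ 0)
    (ξ ξ₁ : Fin 3 → ℝ)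
    (hξ : dot3 ξ ξ = 1) (hξ₁ : dot3 ξ₁ ξ₁ = 1) (hperp : dot3 ξ ξ₁ = 0)
    (u : (Fin 3 → ℝ) → Fin 3 → ℝ)
    (hu : ∀ x, u x
      = (lam⁻¹ * lam⁻¹ * (ψ (lam * (dot3 ξ₁ x + μ * t)) * Ψ (lam * (dot3 ξ x)))) • ξ₁) :
    ∀ x, vcurl (vcurl u) x
      = (ψ (lam * (dot3 ξ₁ x + μ * t)) * (-(deriv (deriv Ψ) (lam * (dot3 ξ x))))) • ξ₁
        + (deriv ψ (lam * (dot3 ξ₁ x + μ * t)) * deriv Ψ (lam * (dot3 ξ x))) • ξ := by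
  have hψ1 : ContDiff ℝ 1 ψ := hψ.of_le (by norm_num)
  have hΨ1 : ContDiff ℝ 1 Ψ := hΨ.of_le (by norm_num)
  have hΨ' : ContDiff ℝ 1 (deriv Ψ) := (contDiff_succ_iff_deriv.mp (by exact_mod_cast hΨ)).2.2
  have hj : ∀ j : Fin 3, (fun y => u y j)
      = fun y => lam⁻¹ * lam⁻¹ * (ψ (lam * (dot3 ξ₁ y + μ * t)) * Ψ (lam * dot3 ξ y)) * ξ₁ j := by
    intro j; funext y; rw [hu y]; simp [smul_eq_mul]
  have hcurl : vcurl u = fun x j =>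
      lam⁻¹ * (ψ (lam * (dot3 ξ₁ x + μ * t)) * deriv Ψ (lam * dot3 ξ x)) *
        ![ξ 1 * ξ₁ 2 - ξ 2 * ξ₁ 1, ξ 2 * ξ₁ 0 - ξ 0 * ξ₁ 2, ξ 0 * ξ₁ 1 - ξ 1 * ξ₁ 0] j := by
    funext x j
    rw [vcurl]
    fin_cases j <;>
      simp only [Fin.isValue, fin3_mk0, fin3_mk1, fin3_mk2, Matrix.cons_val_zero,
        Matrix.cons_val_one, Matrix.head_cons, Matrix.cons_val_two, Matrix.tail_cons, hj,
        pderiv3_blockA ψ Ψ hψ1 hΨ1 lam μ t hlam ξ ξ₁] <;>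
      ring
  intro x
  rw [hcurl, vcurl]
  simp only [Fin.isValue, pderiv3_blockB ψ (deriv Ψ) hψ1 hΨ' lam μ t hlam ξ ξ₁]
  simp only [dot3, Fin.sum_univ_three] at hξ hξ₁ hperp
  funext j
  fin_cases j <;>
    simp only [Fin.isValue, fin3_mk0, fin3_mk1, fin3_mk2, Matrix.cons_val_zero,
      Matrix.cons_val_one, Matrix.head_cons, Matrix.cons_val_two, Matrix.tail_cons,
      Pi.add_apply, Pi.smul_apply, smul_eq_mul, dot3, Fin.sum_univ_three]
  · linear_combination
      (deriv ψ (lam * (ξ₁ 0 * x 0 + ξ₁ 1 * x 1 + ξ₁ 2 * x 2 + μ * t)) *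
        deriv Ψ (lam * (ξ 0 * x 0 + ξ 1 * x 1 + ξ 2 * x 2))) * (ξ 0 * hξ₁ - ξ₁ 0 * hperp)
      + (ψ (lam * (ξ₁ 0 * x 0 + ξ₁ 1 * x 1 + ξ₁ 2 * x 2 + μ * t)) *
        deriv (deriv Ψ) (lam * (ξ 0 * x 0 + ξ 1 * x 1 + ξ 2 * x 2))) * (ξ 0 * hperp - ξ₁ 0 * hξ)
  · linear_combination
      (deriv ψ (lam * (ξ₁ 0 * x 0 + ξ₁ 1 * x 1 + ξ₁ 2 * x 2 + μ * t)) *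
        deriv Ψ (lam * (ξ 0 * x 0 + ξ 1 * x 1 + ξ 2 * x 2))) * (ξ 1 * hξ₁ - ξ₁ 1 * hperp)
      + (ψ (lam * (ξ₁ 0 * x 0 + ξ₁ 1 * x 1 + ξ₁ 2 * x 2 + μ * t)) *
        deriv (deriv Ψ) (lam * (ξ 0 * x 0 + ξ 1 * x 1 + ξ 2 * x 2))) * (ξ 1 * hperp - ξ₁ 1 * hξ)
  · linear_combination
      (deriv ψ (lam * (ξ₁ 0 * x 0 + ξ₁ 1 * x 1 + ξ₁ 2 * x 2 + μ * t)) *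
        deriv Ψ (lam * (ξ 0 * x 0 + ξ 1 * x 1 + ξ 2 * x 2))) * (ξ 2 * hξ₁ - ξ₁ 2 * hperp)
      + (ψ (lam * (ξ₁ 0 * x 0 + ξ₁ 1 * x 1 + ξ₁ 2 * x 2 + μ * t)) *
        deriv (deriv Ψ) (lam * (ξ 0 * x 0 + ξ 1 * x 1 + ξ 2 * x 2))) * (ξ 2 * hperp - ξ₁ 2 * hξ)
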